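/- Let N ≥ 1 be an integer, m > 1 and r > 0. For 0 < y < ρ define η = √(ρ² − y²), D = √( η² (1+η)² + y² ), E = (1+η)² + η(1+η) − 1, F(ρ,y) = − ( N (1+η)^m / D + y² (1+η)^m E / D³ − m y² (1+η)^{m−1} / (η D) ), and G(ρ,y) = ( ρ/η − F(ρ,y) ) / (1+η). Then lim_{(ρ,y) → (r,r), 0 < y < ρ} G(ρ,y) · √(ρ² − y²) = r (1 − m); in particular this limit is negative. -/

import Mathlib

noncomputable section

/-- `η = √(ρ² − y²)`. -/
def ηv (ρ y : ℝ) : ℝ := Real.sqrt (ρ ^ 2 - y ^ 2)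

/-- `D = √(η²(1+η)² + y²)`. -/
def Dv (ρ y : ℝ) : ℝ := Real.sqrt ((ηv ρ y) ^ 2 * (1 + ηv ρ y) ^ 2 + y ^ 2)

/-- `E = (1+η)² + η(1+η) − 1`. -/
def Ev (ρ y : ℝ) : ℝ := (1 + ηv ρ y) ^ 2 + ηv ρ y * (1 + ηv ρ y) - 1

/-- `F(ρ,y) = −( N(1+η)^m/D + y²(1+η)^m E/D³ − m y²(1+η)^{m−1}/(ηD) )`. -/
def Fv (N : ℕ) (m ρ y : ℝ) : ℝ :=
  -(N * (1 + ηv ρ y) ^ m / Dv ρ y + y ^ 2 * (1 + ηv ρ y) ^ m * Ev ρ y / (Dv ρ y) ^ 3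
    - m * y ^ 2 * (1 + ηv ρ y) ^ (m - 1) / (ηv ρ y * Dv ρ y))

/-- `G(ρ,y) = (ρ/η − F(ρ,y))/(1+η)`. -/
def Gv (N : ℕ) (m ρ y : ℝ) : ℝ := (ρ / ηv ρ y - Fv N m ρ y) / (1 + ηv ρ y)

/-- `G(ρ,y)·√(ρ² − y²) → r(1−m)` as `(ρ,y) → (r,r)` within
`{0 < y < ρ}`; in particular the limit is negative. -/
theorem stmt_16 (N : ℕ) (hN : 1 ≤ N) (m r : ℝ) (hm : 1 < m) (hr : 0 < r) :
    Filter.Tendsto (fun p : ℝ × ℝ => Gv N m p.1 p.2 * Real.sqrt (p.1 ^ 2 - p.2 ^ 2))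
      (nhdsWithin (r, r) {p : ℝ × ℝ | 0 < p.2 ∧ p.2 < p.1})
      (nhds (r * (1 - m))) ∧
    r * (1 - m) < 0 := by
  have hrne : r ≠ 0 := hr.ne'
  constructor
  · set l := nhdsWithin ((r : ℝ), (r : ℝ)) {p : ℝ × ℝ | 0 < p.2 ∧ p.2 < p.1} with hl
    have hx : Filter.Tendsto (fun p : ℝ × ℝ => p.1) l (nhds r) :=
      (continuous_fst.tendsto _).mono_left nhdsWithin_le_nhds
    have hy : Filter.Tendsto (fun p : ℝ × ℝ => p.2) l (nhds r) :=
      (continuous_snd.tendsto _).mono_left nhdsWithin_le_nhds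
    have hη : Filter.Tendsto (fun p : ℝ × ℝ => ηv p.1 p.2) l (nhds 0) := by
      have h0 : Filter.Tendsto (fun p : ℝ × ℝ => p.1 ^ 2 - p.2 ^ 2) l (nhds 0) := by
        have := (hx.pow 2).sub (hy.pow 2)
        simpa using this
      have := (Real.continuous_sqrt.tendsto 0).comp h0
      simpa [ηv, Function.comp_def] using this
    have h1η : Filter.Tendsto (fun p : ℝ × ℝ => 1 + ηv p.1 p.2) l (nhds 1) := by
      have := (tendsto_const_nhds (x := (1:ℝ))).add hη
      simpa using (this : Filter.Tendsto (fun p : ℝ × ℝ => 1 + ηv p.1 p.2) l (nhds (1 + 0)))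
    have hD : Filter.Tendsto (fun p : ℝ × ℝ => Dv p.1 p.2) l (nhds r) := by
      have hin : Filter.Tendsto
          (fun p : ℝ × ℝ => (ηv p.1 p.2) ^ 2 * (1 + ηv p.1 p.2) ^ 2 + p.2 ^ 2)
          l (nhds (r ^ 2)) := by
        have := ((hη.pow 2).mul (h1η.pow 2)).add (hy.pow 2)
        simpa using this
      have := (Real.continuous_sqrt.tendsto (r ^ 2)).comp hin
      simpa [Dv, Function.comp_def, Real.sqrt_sq hr.le] using this
    have hE : Filter.Tendsto (fun p : ℝ × ℝ => Ev p.1 p.2) l (nhds 0) := by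
      have := ((h1η.pow 2).add (hη.mul h1η)).sub (tendsto_const_nhds (x := (1:ℝ)))
      simpa [Ev] using this
    have hpm : Filter.Tendsto (fun p : ℝ × ℝ => (1 + ηv p.1 p.2) ^ m) l (nhds 1) := by
      have := h1η.rpow (tendsto_const_nhds (x := m)) (Or.inl one_ne_zero)
      simpa using this
    have hpm1 : Filter.Tendsto (fun p : ℝ × ℝ => (1 + ηv p.1 p.2) ^ (m - 1)) l (nhds 1) := by
      have := h1η.rpow (tendsto_const_nhds (x := m - 1)) (Or.inl one_ne_zero)
      simpa using this
    -- The auxiliary function H, equal to G·η on the set.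
    have hH : Filter.Tendsto (fun p : ℝ × ℝ =>
        (p.1 + (N : ℝ) * ηv p.1 p.2 * (1 + ηv p.1 p.2) ^ m / Dv p.1 p.2
          + ηv p.1 p.2 * p.2 ^ 2 * (1 + ηv p.1 p.2) ^ m * Ev p.1 p.2 / (Dv p.1 p.2) ^ 3
          - m * p.2 ^ 2 * (1 + ηv p.1 p.2) ^ (m - 1) / Dv p.1 p.2) / (1 + ηv p.1 p.2))
        l (nhds (r * (1 - m))) := by
      have hnum : Filter.Tendsto (fun p : ℝ × ℝ =>
          p.1 + (N : ℝ) * ηv p.1 p.2 * (1 + ηv p.1 p.2) ^ m / Dv p.1 p.2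
            + ηv p.1 p.2 * p.2 ^ 2 * (1 + ηv p.1 p.2) ^ m * Ev p.1 p.2 / (Dv p.1 p.2) ^ 3
            - m * p.2 ^ 2 * (1 + ηv p.1 p.2) ^ (m - 1) / Dv p.1 p.2)
          l (nhds (r - m * r)) := by
        have t1 := (((tendsto_const_nhds (x := (N:ℝ))).mul hη).mul hpm).div hD hrne
        have t2 := (((hη.mul (hy.pow 2)).mul hpm).mul hE).div (hD.pow 3)
          (by positivity)
        have t3 := (((tendsto_const_nhds (x := m)).mul (hy.pow 2)).mul hpm1).div hD hrne
        have := ((hx.add t1).add t2).sub t3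
        have hval : r + (N : ℝ) * 0 * 1 / r + 0 * r ^ 2 * 1 * 0 / r ^ 3 - m * r ^ 2 * 1 / r
            = r - m * r := by field_simp; ring
        rw [hval] at this
        exact this
      have := hnum.div h1η one_ne_zero
      have hval : (r - m * r) / 1 = r * (1 - m) := by ring
      rw [hval] at this
      exact this
    refine Filter.Tendsto.congr' ?_ hH
    filter_upwards [self_mem_nhdsWithin] with p hp
    obtain ⟨hy0, hyx⟩ := hp
    have hηpos : 0 < ηv p.1 p.2 := Real.sqrt_pos.mpr (by nlinarith)
    have hDpos : 0 < Dv p.1 p.2 := Real.sqrt_pos.mpr (by nlinarith)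
    have h1pos : (0:ℝ) < 1 + ηv p.1 p.2 := by linarith
    have hsq : Real.sqrt (p.1 ^ 2 - p.2 ^ 2) = ηv p.1 p.2 := rfl
    rw [hsq]
    simp only [Gv, Fv]
    field_simp
    ring
  · nlinarith

end
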